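/- arXiv:0802.2171 — 2 statements merged into one kernel-verified Lean document; each statement's English description precedes it below -/
import Mathlib

section
/- For the zero-range partition function Z_{N,κ} = Σ_{η ∈ E_N} N^α / ∏_{x∈S} p(η(x)) with p(0)=1, p(n)=n^α (α > 1, κ ≥ 2), there exists a constant δ_κ > 0 such that δ_κ < Z_{N,κ} < δ_κ^{-1} for every N ≥ 1. -/
open Filter

attribute [local instance] Classical.propDecidable

noncomputable section

/-- `p(0) = 1`, `p(n) = n^α` for `n ≥ 1`. -/
def pZR (α : ℝ) (n : ℕ) : ℝ := if n = 0 then 1 else (n : ℝ) ^ α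

/-- The zero-range jump rate: `g(1) = 1` and `g(n) = (n/(n-1))^α` for `n ≥ 2`,
so that `g(1)⋯g(n) = n^α`. -/
def gZR (α : ℝ) (n : ℕ) : ℝ := if n ≤ 1 then 1 else (n : ℝ) ^ α / ((n - 1 : ℕ) : ℝ) ^ α

/-- The configuration space `E_N = {η : Fin κ → ℕ | Σ_x η(x) = N}` as a finset. -/
def confZR (κ N : ℕ) : Finset (Fin κ → ℕ) := Finset.Nat.antidiagonalTuple κ N

/-- The normalizing constant `Z_{N,κ}`. -/
def ZZR (α : ℝ) (κ N : ℕ) : ℝ :=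
  ∑ η ∈ confZR κ N, (N : ℝ) ^ α / ∏ x, pZR α (η x)

/-- The invariant measure `ν_N(η) = Z_{N,κ}⁻¹ N^α / ∏_x p(η(x))`. -/
def nuZR (α : ℝ) (κ N : ℕ) (η : Fin κ → ℕ) : ℝ :=
  (1 / ZZR α κ N) * ((N : ℝ) ^ α / ∏ x, pZR α (η x))

/-- `σ^{x,y}η`: move one particle from `x` to `y` (for `x ≠ y`). -/
def moveOne {κ : ℕ} (x y : Fin κ) (η : Fin κ → ℕ) : Fin κ → ℕ :=
  fun z => if z = x then η x - 1 else if z = y then η y + 1 else η z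


lemma pZR_pos {α : ℝ} (n : ℕ) : 0 < pZR α n := by
  unfold pZR; split
  · norm_num
  · exact Real.rpow_pos_of_pos (by exact_mod_cast Nat.pos_of_ne_zero ‹_›) α

def Bzr (α : ℝ) : ℝ := 1 + ∑' n : ℕ, (((n : ℝ) + 1) ^ α)⁻¹

lemma summable_aux {α : ℝ} (hα : 1 < α) : Summable (fun n : ℕ => (((n : ℝ) + 1) ^ α)⁻¹) := by
  have h : Summable (fun n : ℕ => ((n : ℝ) ^ α)⁻¹) := Real.summable_nat_rpow_inv.mpr hα
  have := (summable_nat_add_iff 1).mpr h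
  simpa [Nat.cast_add] using this

lemma S_le_B {α : ℝ} (hα : 1 < α) (N : ℕ) :
    ∑ n ∈ Finset.range (N + 1), (pZR α n)⁻¹ ≤ Bzr α := by
  rw [Finset.sum_range_succ']
  have h1 : ∀ n : ℕ, (pZR α (n + 1))⁻¹ = (((n : ℝ) + 1) ^ α)⁻¹ := by
    intro n; unfold pZR; simp
  simp only [h1]
  have h2 : (pZR α 0)⁻¹ = 1 := by unfold pZR; simp
  rw [h2, Bzr, add_comm]
  gcongr
  exact Summable.sum_le_tsum _ (fun n _ => by positivity) (summable_aux hα)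

lemma ZZR_le {α : ℝ} (hα : 1 < α) {κ : ℕ} (hκ : 1 ≤ κ) (N : ℕ) (hN : 1 ≤ N) :
    ZZR α κ N ≤ κ * ((κ:ℝ)^α * Bzr α ^ (κ-1)) := by
  have hα0 : (0:ℝ) ≤ α := by linarith
  -- per-configuration bound
  have key : ∀ η ∈ confZR κ N, (N : ℝ) ^ α / ∏ x, pZR α (η x)
      ≤ ∑ y : Fin κ, (κ:ℝ)^α * ∏ x ∈ Finset.univ.erase y, (pZR α (η x))⁻¹ := by
    intro η hη
    have hsum : ∑ x, η x = N := Finset.Nat.mem_antidiagonalTuple.mp hη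
    obtain ⟨x0, -, hx0⟩ := Finset.exists_max_image Finset.univ η ⟨⟨0, hκ⟩, Finset.mem_univ _⟩
    have hNκ : N ≤ κ * η x0 := by
      have := Finset.sum_le_card_nsmul Finset.univ η (η x0)
        (fun x _ => hx0 x (Finset.mem_univ x))
      simpa [hsum, Finset.card_univ, smul_eq_mul] using this
    have hx1 : η x0 ≠ 0 := by rintro h0; rw [h0, Nat.mul_zero] at hNκ; omega
    have hp : pZR α (η x0) = ((η x0 : ℕ) : ℝ) ^ α := by simp [pZR, hx1]
    have hNa : (N:ℝ)^α ≤ (κ:ℝ)^α * pZR α (η x0) := by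
      rw [hp, ← Real.mul_rpow (by positivity) (by positivity)]
      apply Real.rpow_le_rpow (by positivity) _ hα0
      exact_mod_cast hNκ
    have hprodsplit : ∏ x, pZR α (η x)
        = pZR α (η x0) * ∏ x ∈ Finset.univ.erase x0, pZR α (η x) :=
      (Finset.mul_prod_erase Finset.univ _ (Finset.mem_univ x0)).symm
    have hP : (0:ℝ) < ∏ x ∈ Finset.univ.erase x0, pZR α (η x) :=
      Finset.prod_pos fun x _ => pZR_pos _
    have hstep : (N : ℝ) ^ α / ∏ x, pZR α (η x)
        ≤ (κ:ℝ)^α * ∏ x ∈ Finset.univ.erase x0, (pZR α (η x))⁻¹ := by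
      rw [hprodsplit, Finset.prod_inv_distrib, ← div_eq_mul_inv]
      calc (N:ℝ)^α / (pZR α (η x0) * ∏ x ∈ Finset.univ.erase x0, pZR α (η x))
          ≤ ((κ:ℝ)^α * pZR α (η x0)) /
            (pZR α (η x0) * ∏ x ∈ Finset.univ.erase x0, pZR α (η x)) := by
            gcongr
            exact le_of_lt (mul_pos (pZR_pos _) hP)
        _ = (κ:ℝ)^α / ∏ x ∈ Finset.univ.erase x0, pZR α (η x) := by
            rw [mul_comm ((κ:ℝ)^α) (pZR α (η x0)),
              mul_div_mul_left _ _ (ne_of_gt (pZR_pos (α := α) (η x0)))]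
    refine hstep.trans (Finset.single_le_sum
      (f := fun y => (κ:ℝ)^α * ∏ x ∈ Finset.univ.erase y, (pZR α (η x))⁻¹)
      (fun y _ => ?_) (Finset.mem_univ x0))
    have : (0:ℝ) ≤ ∏ x ∈ Finset.univ.erase y, (pZR α (η x))⁻¹ :=
      Finset.prod_nonneg fun x _ => le_of_lt (inv_pos.mpr (pZR_pos _))
    positivity
  -- fixed-site bound
  have hy : ∀ y : Fin κ, ∑ η ∈ confZR κ N, ∏ x ∈ Finset.univ.erase y, (pZR α (η x))⁻¹
      ≤ Bzr α ^ (κ - 1) := by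
    intro y
    set t : Fin κ → Finset ℕ := fun x => if x = y then {0} else Finset.range (N+1) with ht
    set f : Fin κ → ℕ → ℝ := fun x n => if x = y then 1 else (pZR α n)⁻¹ with hf
    set φ : (Fin κ → ℕ) → (Fin κ → ℕ) := fun η => Function.update η y 0 with hφ
    have hterm : ∀ η ∈ confZR κ N,
        ∏ x ∈ Finset.univ.erase y, (pZR α (η x))⁻¹ = ∏ x, f x (φ η x) := by
      intro η hη
      rw [← Finset.mul_prod_erase Finset.univ (fun x => f x (φ η x)) (Finset.mem_univ y)]
      have h1 : f y (φ η y) = 1 := by simp [hf]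
      rw [h1, one_mul]
      refine Finset.prod_congr rfl fun x hx => ?_
      have hxy : x ≠ y := Finset.ne_of_mem_erase hx
      simp [hf, hφ, hxy, Function.update_of_ne hxy]
    have hinj : Set.InjOn φ (confZR κ N) := by
      intro a ha b hb hab
      have hsa : ∑ x, a x = N := Finset.Nat.mem_antidiagonalTuple.mp ha
      have hsb : ∑ x, b x = N := Finset.Nat.mem_antidiagonalTuple.mp hb
      have hxy : ∀ x, x ≠ y → a x = b x := by
        intro x hx
        have := congrFun hab x
        simpa [hφ, Function.update_of_ne hx] using this
      funext x
      by_cases hx : x = y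
      · subst hx
        have h1 : ∑ z ∈ Finset.univ.erase x, a z = ∑ z ∈ Finset.univ.erase x, b z :=
          Finset.sum_congr rfl fun z hz => hxy z (Finset.ne_of_mem_erase hz)
        have h2 := Finset.add_sum_erase Finset.univ a (Finset.mem_univ x)
        have h3 := Finset.add_sum_erase Finset.univ b (Finset.mem_univ x)
        omega
      · exact hxy x hx
    have hmemt : ∀ η ∈ confZR κ N, φ η ∈ Fintype.piFinset t := by
      intro η hη
      rw [Fintype.mem_piFinset]
      intro x
      by_cases hx : x = y
      · subst hx; simp [hφ, ht]
      · have hle : η x ≤ N := by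
          have hs := Finset.Nat.mem_antidiagonalTuple.mp hη
          calc η x ≤ ∑ z, η z :=
                Finset.single_le_sum (fun z _ => Nat.zero_le _) (Finset.mem_univ x)
            _ = N := hs
        simp [hφ, ht, hx, Function.update_of_ne hx, Finset.mem_range]
        omega
    calc ∑ η ∈ confZR κ N, ∏ x ∈ Finset.univ.erase y, (pZR α (η x))⁻¹
        = ∑ η ∈ confZR κ N, ∏ x, f x (φ η x) := Finset.sum_congr rfl hterm
      _ = ∑ g ∈ (confZR κ N).image φ, ∏ x, f x (g x) := by
          rw [Finset.sum_image fun a ha b hb => hinj ha hb]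
      _ ≤ ∑ g ∈ Fintype.piFinset t, ∏ x, f x (g x) := by
          apply Finset.sum_le_sum_of_subset_of_nonneg
          · intro g hg
            obtain ⟨η, hη, rfl⟩ := Finset.mem_image.mp hg
            exact hmemt η hη
          · intro g _ _
            refine Finset.prod_nonneg fun x _ => ?_
            by_cases hx : x = y
            · simp [hf, hx]
            · simp only [hf, if_neg hx, inv_nonneg]
              exact le_of_lt (pZR_pos _)
      _ = ∏ x, ∑ n ∈ t x, f x n := (Finset.prod_univ_sum t f).symm
      _ = ∏ x ∈ Finset.univ.erase y, ∑ n ∈ Finset.range (N+1), (pZR α n)⁻¹ := by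
          rw [← Finset.mul_prod_erase Finset.univ _ (Finset.mem_univ y)]
          have h1 : ∑ n ∈ t y, f y n = 1 := by simp [ht, hf]
          rw [h1, one_mul]
          refine Finset.prod_congr rfl fun x hx => ?_
          have hxy : x ≠ y := Finset.ne_of_mem_erase hx
          simp [ht, hf, hxy]
      _ = (∑ n ∈ Finset.range (N+1), (pZR α n)⁻¹) ^ (κ - 1) := by
          rw [Finset.prod_const, Finset.card_erase_of_mem (Finset.mem_univ y),
            Finset.card_univ, Fintype.card_fin]
      _ ≤ Bzr α ^ (κ - 1) := by
          apply pow_le_pow_left₀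
            (Finset.sum_nonneg fun n _ => le_of_lt (inv_pos.mpr (pZR_pos _)))
            (S_le_B hα N)
  calc ZZR α κ N
      ≤ ∑ η ∈ confZR κ N, ∑ y : Fin κ,
          (κ:ℝ)^α * ∏ x ∈ Finset.univ.erase y, (pZR α (η x))⁻¹ :=
        Finset.sum_le_sum key
    _ = ∑ y : Fin κ, (κ:ℝ)^α *
          ∑ η ∈ confZR κ N, ∏ x ∈ Finset.univ.erase y, (pZR α (η x))⁻¹ := by
        rw [Finset.sum_comm]
        exact Finset.sum_congr rfl fun y _ => (Finset.mul_sum _ _ _).symm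
    _ ≤ ∑ y : Fin κ, (κ:ℝ)^α * Bzr α ^ (κ - 1) :=
        Finset.sum_le_sum fun y _ =>
          mul_le_mul_of_nonneg_left (hy y) (by positivity)
    _ = κ * ((κ:ℝ)^α * Bzr α ^ (κ - 1)) := by
        rw [Finset.sum_const, Finset.card_univ, Fintype.card_fin, nsmul_eq_mul]

lemma term_nonneg {α : ℝ} {κ : ℕ} (N : ℕ) (η : Fin κ → ℕ) :
    0 ≤ (N : ℝ) ^ α / ∏ x, pZR α (η x) := by
  apply div_nonneg
  · positivity
  · exact le_of_lt (Finset.prod_pos fun x _ => pZR_pos _)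

lemma one_le_ZZR {α : ℝ} {κ N : ℕ} (hκ : 1 ≤ κ) (hN : 1 ≤ N) : 1 ≤ ZZR α κ N := by
  have hκ0 : 0 < κ := hκ
  set x0 : Fin κ := ⟨0, hκ0⟩
  set η0 : Fin κ → ℕ := fun i => if i = x0 then N else 0 with hη0
  have hmem : η0 ∈ confZR κ N := by
    rw [confZR, Finset.Nat.mem_antidiagonalTuple]
    simp [hη0]
  have hterm : (N : ℝ) ^ α / ∏ x, pZR α (η0 x) = 1 := by
    have hprod : ∏ x, pZR α (η0 x) = (N : ℝ) ^ α := by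
      have he : ∀ x : Fin κ, pZR α (η0 x) = if x = x0 then (N:ℝ)^α else 1 := by
        intro x
        by_cases h : x = x0 <;>
          simp [hη0, h, pZR, Nat.one_le_iff_ne_zero.mp hN]
      simp only [he]
      rw [Finset.prod_ite_eq' Finset.univ x0 (fun _ => (N:ℝ)^α)]
      simp
    rw [hprod]
    exact div_self (by positivity)
  calc (1:ℝ) = (N : ℝ) ^ α / ∏ x, pZR α (η0 x) := hterm.symm
    _ ≤ ZZR α κ N := Finset.single_le_sum (fun η _ => term_nonneg N η) hmem


/-- Uniform bounds on the zero-range partition function: there is `δ_κ > 0` with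
`δ_κ < Z_{N,κ} < δ_κ⁻¹` for every `N ≥ 1`. -/
theorem stmt1 (α : ℝ) (hα : 1 < α) (κ : ℕ) (hκ : 2 ≤ κ) :
    ∃ δ : ℝ, 0 < δ ∧ ∀ N : ℕ, 1 ≤ N → δ < ZZR α κ N ∧ ZZR α κ N < δ⁻¹ := by
  have hκ1 : 1 ≤ κ := by omega
  set C : ℝ := κ * ((κ:ℝ)^α * Bzr α ^ (κ-1)) with hC
  have hB : (0:ℝ) ≤ Bzr α := by
    have h : (0:ℝ) ≤ ∑' n : ℕ, (((n:ℝ)+1)^α)⁻¹ := tsum_nonneg (fun n : ℕ => by positivity : ∀ n : ℕ, (0:ℝ) ≤ (((n:ℝ)+1)^α)⁻¹)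
    rw [Bzr]; linarith
  have hC0 : (0:ℝ) ≤ C := by
    have h1 : (0:ℝ) ≤ (κ:ℝ)^α := Real.rpow_nonneg (by positivity) α
    have h2 : (0:ℝ) ≤ Bzr α ^ (κ-1) := pow_nonneg hB _
    positivity
  have hC1 : (0:ℝ) < C + 1 := by linarith
  refine ⟨min (1/2) (C+1)⁻¹, lt_min (by norm_num) (inv_pos.mpr hC1), fun N hN => ?_⟩
  have hδpos : (0:ℝ) < min (1/2) (C+1)⁻¹ := lt_min (by norm_num) (inv_pos.mpr hC1)
  constructor
  · calc min (1/2) (C+1)⁻¹ ≤ 1/2 := min_le_left _ _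
      _ < 1 := by norm_num
      _ ≤ ZZR α κ N := one_le_ZZR hκ1 hN
  · have h1 : ZZR α κ N ≤ C := ZZR_le hα hκ1 N hN
    have h2 : min (1/2) (C+1)⁻¹ ≤ (C+1)⁻¹ := min_le_right _ _
    have h3 : ((C+1)⁻¹)⁻¹ ≤ (min (1/2) (C+1)⁻¹)⁻¹ := by
      apply inv_anti₀ hδpos h2
    rw [inv_inv] at h3
    linarith

end
end

section
/- For the condensed zero-range invariant measure ν_N on κ sites with α > 1: with 𝓔^x_N = {η : η(x) ≥ N − ℓ_N} for a sequence ℓ_N → ∞ with ℓ_N/N → 0, one has lim_{N→∞} ν_N(E_N ∖ ∪_{x∈S} 𝓔^x_N) = 0 and lim_{N→∞} ν_N(𝓔^x_N) = 1/κ for every x ∈ S. -/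
open Filter

attribute [local instance] Classical.propDecidable

noncomputable section

namespace ZRaux
variable (α : ℝ)

/-- `f n = 1/p(n)` -/
def f (n : ℕ) : ℝ := (pZR α n)⁻¹

/-- canonical partition function without normalization -/
def SS (k m : ℕ) : ℝ := ∑ η ∈ Finset.Nat.antidiagonalTuple k m, ∏ x, f α (η x)

/-- `Γ = ∑ 1/p(n)` -/
def G : ℝ := ∑' n, f α n

/-- partial sums of `SS` up to `ℓ N` -/
def TT (ℓ : ℕ → ℕ) (k N : ℕ) : ℝ := ∑ j ∈ Finset.range (ℓ N + 1), SS α k j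

/-- the correction factor `(N/(N-ℓ N))^α` -/
def cc (ℓ : ℕ → ℕ) (N : ℕ) : ℝ := ((N:ℝ) / ((N - ℓ N : ℕ):ℝ))^α

variable {α}

lemma pZR_pos (hα : 0 < α) (n : ℕ) : 0 < pZR α n := by
  unfold pZR; split
  · norm_num
  · exact Real.rpow_pos_of_pos (by positivity) _

lemma f_pos (hα : 0 < α) (n : ℕ) : 0 < f α n := inv_pos.2 (pZR_pos hα n)

lemma f_zero : f α 0 = 1 := by simp [f, pZR]

lemma f_eq (n : ℕ) (hn : n ≠ 0) : f α n = ((n : ℝ) ^ α)⁻¹ := by simp [f, pZR, hn]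

lemma f_anti (hα : 0 < α) {m n : ℕ} (h : m ≤ n) : f α n ≤ f α m := by
  rcases Nat.eq_zero_or_pos m with rfl | hm
  · rcases Nat.eq_zero_or_pos n with rfl | hn
    · exact le_rfl
    · rw [f_zero, f_eq n hn.ne']
      rw [inv_le_one_iff₀]
      right
      exact Real.one_le_rpow (by exact_mod_cast hn) hα.le
  · have hn : 0 < n := lt_of_lt_of_le hm h
    rw [f_eq n hn.ne', f_eq m hm.ne']
    apply inv_anti₀
    · exact Real.rpow_pos_of_pos (by exact_mod_cast hm) _
    · exact Real.rpow_le_rpow (by positivity) (by exact_mod_cast h) hα.le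

lemma f_summable (hα : 1 < α) : Summable (f α) := by
  have h1 : Summable (fun n : ℕ => ((n : ℝ) ^ α)⁻¹) := Real.summable_nat_rpow_inv.mpr hα
  have h2 : Summable (fun n : ℕ => if n = 0 then (1 : ℝ) else 0) := by
    apply summable_of_finite_support
    apply Set.Finite.subset (Set.finite_singleton 0)
    intro n hn
    simp only [Function.mem_support] at hn
    by_contra h
    exact h (by simp_all)
  have := h1.add h2
  apply this.congr
  intro n
  rcases Nat.eq_zero_or_pos n with rfl | hn
  · simp [f_zero, Real.zero_rpow (by linarith : α ≠ 0)]
  · simp [f_eq n hn.ne', hn.ne']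

lemma G_ge_one (hα : 1 < α) : 1 ≤ G α := by
  have := Summable.le_tsum (f_summable hα) 0 (fun n _ => (f_pos (by linarith) n).le)
  simpa [f_zero, G] using this


/-- fiber of the coordinate map at `x` -/
lemma sum_fiber_coord (k N m : ℕ) (x : Fin (k+1)) (hm : m ≤ N) :
    ∑ η ∈ (Finset.Nat.antidiagonalTuple (k+1) N).filter (fun η => η x = m),
      ∏ y, f α (η y) = f α m * SS α k (N - m) := by
  rw [SS, Finset.mul_sum]
  refine Finset.sum_nbij' (fun η => fun i => η (x.succAbove i))
    (fun ξ => x.insertNth m ξ) ?_ ?_ ?_ ?_ ?_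
  · intro η hη
    simp only [Finset.mem_filter, Finset.Nat.mem_antidiagonalTuple] at hη ⊢
    obtain ⟨h1, h2⟩ := hη
    rw [Fin.sum_univ_succAbove η x, h2] at h1
    omega
  · intro ξ hξ
    simp only [Finset.Nat.mem_antidiagonalTuple] at hξ
    simp only [Finset.mem_filter, Finset.Nat.mem_antidiagonalTuple,
      Fin.insertNth_apply_same, and_true]
    rw [Fin.sum_univ_succAbove (x.insertNth m ξ) x, Fin.insertNth_apply_same]
    rw [Fintype.sum_congr _ _
      (fun i => Fin.insertNth_apply_succAbove (α := fun _ => ℕ) x m ξ i), hξ]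
    omega
  · intro η hη
    simp only [Finset.mem_filter] at hη
    rw [← hη.2]
    exact Fin.insertNth_self_removeNth x η
  · intro ξ _
    funext i; exact Fin.insertNth_apply_succAbove (α := fun _ => ℕ) x m ξ i
  · intro η hη
    simp only [Finset.mem_filter] at hη
    rw [Fin.prod_univ_succAbove (fun y => f α (η y)) x, hη.2]


lemma SS_nonneg (hα : 0 < α) (k m : ℕ) : 0 ≤ SS α k m :=
  Finset.sum_nonneg fun η _ => Finset.prod_nonneg fun y _ => (f_pos hα (η y)).le

lemma sum_filter_decomp (k N : ℕ) (x : Fin (k+1)) (P : ℕ → Prop) [DecidablePred P]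
    [DecidablePred (fun η : Fin (k+1) → ℕ => P (η x))] :
    ∑ η ∈ (Finset.Nat.antidiagonalTuple (k+1) N).filter (fun η => P (η x)),
      ∏ y, f α (η y)
    = ∑ m ∈ (Finset.range (N+1)).filter P, f α m * SS α k (N - m) := by
  have hmap : ∀ η ∈ (Finset.Nat.antidiagonalTuple (k+1) N).filter (fun η => P (η x)),
      η x ∈ (Finset.range (N+1)).filter P := by
    intro η hη
    simp only [Finset.mem_filter, Finset.Nat.mem_antidiagonalTuple] at hη
    simp only [Finset.mem_filter, Finset.mem_range]
    have : η x ≤ N := by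
      rw [← hη.1]
      exact Finset.single_le_sum (fun y _ => Nat.zero_le _) (Finset.mem_univ x)
    exact ⟨by omega, hη.2⟩
  have hdec := Finset.sum_fiberwise_of_maps_to (g := fun η : Fin (k+1) → ℕ => η x) hmap
    (fun η : Fin (k+1) → ℕ => ∏ y, f α (η y))
  rw [← hdec]
  · apply Finset.sum_congr rfl
    intro m hm
    simp only [Finset.mem_filter, Finset.mem_range] at hm
    rw [Finset.filter_filter]
    rw [← sum_fiber_coord k N m x (by omega)]
    apply Finset.sum_congr _ (fun _ _ => rfl)
    ext η
    simp only [Finset.mem_filter]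
    constructor
    · rintro ⟨h1, _, h3⟩; exact ⟨h1, h3⟩
    · rintro ⟨h1, h3⟩; exact ⟨h1, h3 ▸ hm.2, h3⟩

lemma SS_succ (k N : ℕ) :
    SS α (k+1) N = ∑ m ∈ Finset.range (N+1), f α m * SS α k (N - m) := by
  have := sum_filter_decomp (α := α) k N 0 (fun _ => True)
  simpa [SS] using this

lemma hasSum_SS (hα : 1 < α) (k : ℕ) : HasSum (SS α k) (G α ^ k) := by
  induction k with
  | zero =>
    have : SS α 0 = fun m => if m = 0 then (1:ℝ) else 0 := by
      funext m
      cases m with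
      | zero => simp [SS, Finset.Nat.antidiagonalTuple_zero_zero]
      | succ n => simp [SS, Finset.Nat.antidiagonalTuple_zero_succ]
    rw [this, pow_zero]
    exact hasSum_ite_eq 0 1
  | succ k ih =>
    have hf : Summable fun n => ‖f α n‖ :=
      (f_summable hα).congr fun n => (Real.norm_of_nonneg (f_pos (by linarith) n).le).symm
    have hS : Summable fun n => ‖SS α k n‖ :=
      ih.summable.congr fun n => (Real.norm_of_nonneg (SS_nonneg (by linarith) k n)).symm
    have hsum : Summable fun n => ∑ kl ∈ Finset.HasAntidiagonal.antidiagonal n, f α kl.1 * SS α k kl.2 :=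
      summable_sum_mul_antidiagonal_of_summable_mul
        (summable_mul_of_summable_norm hf hS)
    have htsum : ((∑' n, f α n) * ∑' n, SS α k n)
        = ∑' n, ∑ kl ∈ Finset.HasAntidiagonal.antidiagonal n, f α kl.1 * SS α k kl.2 :=
      tsum_mul_tsum_eq_tsum_sum_antidiagonal_of_summable_norm hf hS
    have heq : ∀ n, SS α (k+1) n
        = ∑ kl ∈ Finset.HasAntidiagonal.antidiagonal n, f α kl.1 * SS α k kl.2 := by
      intro n
      rw [SS_succ, Finset.Nat.sum_antidiagonal_eq_sum_range_succ_mk]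
    have : HasSum (SS α (k+1)) (∑' n, ∑ kl ∈ Finset.HasAntidiagonal.antidiagonal n, f α kl.1 * SS α k kl.2) := by
      rw [funext heq]
      exact hsum.hasSum
    rw [← htsum, ih.tsum_eq, ← G] at this
    rw [pow_succ, mul_comm]
    exact this

lemma prod_f_eq (κ : ℕ) (η : Fin κ → ℕ) :
    ∏ y, f α (η y) = (∏ y, pZR α (η y))⁻¹ := by
  rw [← Finset.prod_inv_distrib]; rfl

lemma ZZR_eq (κ N : ℕ) : ZZR α κ N = (N:ℝ)^α * SS α κ N := by
  rw [ZZR, SS, Finset.mul_sum]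
  exact Finset.sum_congr rfl fun η _ => by rw [prod_f_eq, div_eq_mul_inv]

lemma nu_sum_eq (κ N : ℕ) (s : Finset (Fin κ → ℕ)) :
    ∑ η ∈ s, nuZR α κ N η = ((N:ℝ)^α * ∑ η ∈ s, ∏ y, f α (η y)) / ZZR α κ N := by
  rw [Finset.mul_sum, Finset.sum_div]
  exact Finset.sum_congr rfl fun η _ => by
    rw [nuZR, prod_f_eq]; ring

lemma Z_ge_one (hα : 0 < α) (κ N : ℕ) (hκ : 0 < κ) (hN : 1 ≤ N) :
    1 ≤ (N:ℝ)^α * SS α κ N := by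
  obtain ⟨k, rfl⟩ : ∃ k, κ = k + 1 := ⟨κ - 1, by omega⟩
  set η₀ : Fin (k+1) → ℕ := Pi.single 0 N with hη₀
  have hmem : η₀ ∈ Finset.Nat.antidiagonalTuple (k+1) N := by
    rw [Finset.Nat.mem_antidiagonalTuple]
    simp [hη₀]
  have hval : ∏ y, f α (η₀ y) = ((N:ℝ)^α)⁻¹ := by
    rw [Finset.prod_eq_single (0 : Fin (k+1))]
    · rw [hη₀, Pi.single_eq_same, f_eq N (by omega)]
    · intro y _ hy
      rw [hη₀, Pi.single_eq_of_ne hy]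
      simp [f, pZR]
    · simp
  have hle : ((N:ℝ)^α)⁻¹ ≤ SS α (k+1) N := by
    rw [← hval, SS]
    exact Finset.single_le_sum (f := fun η : Fin (k+1) → ℕ => ∏ y, f α (η y))
      (fun η _ => Finset.prod_nonneg fun y _ => (f_pos hα _).le) hmem
  have hpos : (0:ℝ) < (N:ℝ)^α := Real.rpow_pos_of_pos (by exact_mod_cast hN) _
  calc (1:ℝ) = (N:ℝ)^α * ((N:ℝ)^α)⁻¹ := by field_simp
  _ ≤ (N:ℝ)^α * SS α (k+1) N := by gcongr


-- termwise bounds on `N^α * f m` for `N - ℓ ≤ m ≤ N`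
lemma Nf_ge_one (hα : 0 < α) {m N : ℕ} (hm1 : 1 ≤ m) (hmN : m ≤ N) :
    1 ≤ (N:ℝ)^α * f α m := by
  rw [f_eq m (by omega)]
  have h1 : (0:ℝ) < (m:ℝ)^α := Real.rpow_pos_of_pos (by exact_mod_cast hm1) _
  have h2 : (m:ℝ)^α ≤ (N:ℝ)^α :=
    Real.rpow_le_rpow (by positivity) (by exact_mod_cast hmN) hα.le
  calc (1:ℝ) = (m:ℝ)^α * ((m:ℝ)^α)⁻¹ := by field_simp
  _ ≤ (N:ℝ)^α * ((m:ℝ)^α)⁻¹ := by gcongr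

lemma Nf_le (hα : 0 < α) {m N a : ℕ} (ha : 1 ≤ a) (ham : a ≤ m) :
    (N:ℝ)^α * f α m ≤ ((N:ℝ)/(a:ℝ))^α := by
  have h0 : (0:ℝ) < (a:ℝ) := by exact_mod_cast ha
  rw [Real.div_rpow (by positivity) h0.le, div_eq_mul_inv, ← f_eq a (by omega)]
  have := f_anti hα ham (α := α)
  have hf : 0 ≤ f α a := (f_pos hα a).le
  gcongr

/-- The well sum written via `Icc`. -/
lemma well_decomp (k N : ℕ) (x : Fin (k+1)) (L : ℕ) (hL : L ≤ N) :
    ∑ η ∈ (Finset.Nat.antidiagonalTuple (k+1) N).filter (fun η => N - L ≤ η x),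
      ∏ y, f α (η y)
    = ∑ m ∈ Finset.Icc (N - L) N, f α m * SS α k (N - m) := by
  rw [sum_filter_decomp (α := α) k N x (fun m => N - L ≤ m)]
  apply Finset.sum_congr _ (fun _ _ => rfl)
  ext m
  simp only [Finset.mem_filter, Finset.mem_range, Finset.mem_Icc]
  omega

lemma sum_Icc_SS (k N L : ℕ) (hL : L ≤ N) :
    ∑ m ∈ Finset.Icc (N - L) N, SS α k (N - m) = ∑ j ∈ Finset.range (L + 1), SS α k j := by
  refine Finset.sum_nbij' (fun m => N - m) (fun j => N - j) ?_ ?_ ?_ ?_ ?_ <;>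
    intros <;> simp_all only [Finset.mem_Icc, Finset.mem_range] <;> omega

/-- lower and upper bounds for the (rescaled) well mass -/
lemma well_bounds (hα : 1 < α) (ℓ : ℕ → ℕ) (k N : ℕ) (x : Fin (k+1))
    (hN : 2 * ℓ N < N) :
    TT α ℓ k N ≤ (N:ℝ)^α * ∑ η ∈ (Finset.Nat.antidiagonalTuple (k+1) N).filter
        (fun η => N - ℓ N ≤ η x), ∏ y, f α (η y)
    ∧ (N:ℝ)^α * ∑ η ∈ (Finset.Nat.antidiagonalTuple (k+1) N).filter
        (fun η => N - ℓ N ≤ η x), ∏ y, f α (η y) ≤ cc α ℓ N * TT α ℓ k N := by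
  have hα0 : (0:ℝ) < α := by linarith
  have hLN : ℓ N ≤ N := by omega
  rw [well_decomp k N x (ℓ N) hLN, Finset.mul_sum]
  have hTT : TT α ℓ k N = ∑ m ∈ Finset.Icc (N - ℓ N) N, SS α k (N - m) := by
    rw [TT, sum_Icc_SS k N (ℓ N) hLN]
  constructor
  · rw [hTT]
    apply Finset.sum_le_sum
    intro m hm
    simp only [Finset.mem_Icc] at hm
    rw [← mul_assoc]
    have h1 : 1 ≤ (N:ℝ)^α * f α m := Nf_ge_one hα0 (by omega) hm.2
    nlinarith [SS_nonneg hα0 k (N - m), h1]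
  · rw [hTT, Finset.mul_sum]
    apply Finset.sum_le_sum
    intro m hm
    simp only [Finset.mem_Icc] at hm
    rw [← mul_assoc]
    have h1 : (N:ℝ)^α * f α m ≤ cc α ℓ N := by
      rw [cc]
      exact Nf_le hα0 (by omega) hm.1
    nlinarith [SS_nonneg hα0 k (N - m), h1]

/-- tail of the series `SS k` beyond the partial sum `TT`. -/
lemma tail_sum_le (hα : 1 < α) (ℓ : ℕ → ℕ) (k N : ℕ) (s : Finset ℕ)
    (hs : ∀ j ∈ s, ℓ N + 1 ≤ j ∧ j ≤ N) :
    ∑ j ∈ s, SS α k j ≤ G α ^ k - TT α ℓ k N := by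
  have hα0 : (0:ℝ) < α := by linarith
  have h1 : ∑ j ∈ s, SS α k j
      ≤ ∑ j ∈ Finset.Icc (ℓ N + 1) N, SS α k j := by
    apply Finset.sum_le_sum_of_subset_of_nonneg
    · intro j hj
      have := hs j hj
      simp only [Finset.mem_Icc]
      omega
    · intro j _ _
      exact SS_nonneg hα0 k j
  have h2 : TT α ℓ k N + ∑ j ∈ Finset.Icc (ℓ N + 1) N, SS α k j
      ≤ G α ^ k := by
    rcases le_or_gt (ℓ N + 1) (N + 1) with hLN | hLN
    · have heq : ∑ j ∈ Finset.range (N+1), SS α k j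
          = TT α ℓ k N + ∑ j ∈ Finset.Icc (ℓ N + 1) N, SS α k j := by
        rw [TT, Finset.range_eq_Ico,
          ← Finset.sum_Ico_consecutive _ (Nat.zero_le _) hLN,
          ← Finset.range_eq_Ico, Finset.Ico_add_one_right_eq_Icc]
      rw [← heq]
      exact sum_le_hasSum _ (fun j _ => SS_nonneg hα0 k j) (hasSum_SS hα k)
    · have : Finset.Icc (ℓ N + 1) N = ∅ := by
        apply Finset.Icc_eq_empty
        omega
      rw [this, Finset.sum_empty, add_zero, TT]
      exact sum_le_hasSum _ (fun j _ => SS_nonneg hα0 k j) (hasSum_SS hα k)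
  linarith

/-- the mid-range (tail) estimate -/
lemma tail_bound (hα : 1 < α) (ℓ : ℕ → ℕ) (k N : ℕ) (x : Fin (k+1))
    (hN1 : 2 * ℓ N < N) (hN2 : 2 * (k+1) ≤ N) :
    (N:ℝ)^α * ∑ η ∈ (Finset.Nat.antidiagonalTuple (k+1) N).filter
      (fun η => N / (k+1) ≤ η x ∧ η x < N - ℓ N), ∏ y, f α (η y)
    ≤ (2*(k+1) : ℝ)^α * (G α ^ k - TT α ℓ k N) := by
  have hα0 : (0:ℝ) < α := by linarith
  set q := N / (k+1) with hq
  have hdiv := Nat.div_add_mod N (k+1)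
  rw [← hq] at hdiv
  have hmod := Nat.mod_lt N (show 0 < k+1 by omega)
  have hq1 : 1 ≤ q := by rw [hq]; exact Nat.one_le_div_iff (by omega) |>.2 (by omega)
  rw [sum_filter_decomp (α := α) k N x (fun m => q ≤ m ∧ m < N - ℓ N)]
  -- bound f m by f q termwise
  have hstep : ∑ m ∈ (Finset.range (N+1)).filter (fun m => q ≤ m ∧ m < N - ℓ N),
      f α m * SS α k (N - m)
      ≤ f α q * ∑ m ∈ (Finset.range (N+1)).filter (fun m => q ≤ m ∧ m < N - ℓ N),
        SS α k (N - m) := by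
    rw [Finset.mul_sum]
    apply Finset.sum_le_sum
    intro m hm
    simp only [Finset.mem_filter, Finset.mem_range] at hm
    have := f_anti hα0 hm.2.1 (α := α)
    nlinarith [SS_nonneg hα0 k (N - m)]
  -- reindex j = N - m and bound by the tail
  have hre : ∑ m ∈ (Finset.range (N+1)).filter (fun m => q ≤ m ∧ m < N - ℓ N),
      SS α k (N - m) ≤ G α ^ k - TT α ℓ k N := by
    have hbij : ∑ m ∈ (Finset.range (N+1)).filter (fun m => q ≤ m ∧ m < N - ℓ N),
        SS α k (N - m)
        = ∑ j ∈ (Finset.range (N+1)).filter (fun j => ℓ N + 1 ≤ j ∧ j ≤ N - q),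
          SS α k j := by
      refine Finset.sum_nbij' (fun m => N - m) (fun j => N - j) ?_ ?_ ?_ ?_ ?_ <;>
        intros <;> simp_all only [Finset.mem_filter, Finset.mem_range] <;> omega
    rw [hbij]
    apply tail_sum_le hα
    intro j hj
    simp only [Finset.mem_filter, Finset.mem_range] at hj
    omega
  have hfq : (N:ℝ)^α * f α q ≤ (2*(k+1) : ℝ)^α := by
    have h1 := Nf_le (N := N) hα0 hq1 (le_refl q)
    have h2 : ((N:ℝ)/(q:ℝ))^α ≤ (2*(k+1) : ℝ)^α := by
      apply Real.rpow_le_rpow (by positivity) _ hα0.le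
      rw [div_le_iff₀ (by exact_mod_cast hq1)]
      have hd : (k+1) * 1 ≤ (k+1) * q := Nat.mul_le_mul_left _ hq1
      have hnat : N ≤ 2 * ((k+1) * q) := by omega
      have : (N : ℝ) ≤ 2*(k+1) * (q:ℝ) := by
        calc (N:ℝ) ≤ ((2*((k+1)*q) : ℕ) : ℝ) := by exact_mod_cast hnat
        _ = 2*(k+1)*(q:ℝ) := by push_cast; ring
      linarith
    linarith
  have hT : 0 ≤ G α ^ k - TT α ℓ k N := by
    have := tail_sum_le hα ℓ k N ∅ (by simp)
    simpa using this
  have hfqpos := f_pos hα0 q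
  have hSnn : 0 ≤ ∑ m ∈ (Finset.range (N+1)).filter (fun m => q ≤ m ∧ m < N - ℓ N),
      SS α k (N - m) := Finset.sum_nonneg fun m _ => SS_nonneg hα0 k (N - m)
  have hNpow : (0:ℝ) ≤ (N:ℝ)^α := Real.rpow_nonneg (by positivity) _
  calc (N:ℝ)^α * ∑ m ∈ (Finset.range (N+1)).filter (fun m => q ≤ m ∧ m < N - ℓ N),
        f α m * SS α k (N - m)
      ≤ (N:ℝ)^α * (f α q * ∑ m ∈ (Finset.range (N+1)).filter
          (fun m => q ≤ m ∧ m < N - ℓ N), SS α k (N - m)) := by gcongr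
    _ = ((N:ℝ)^α * f α q) * ∑ m ∈ (Finset.range (N+1)).filter
          (fun m => q ≤ m ∧ m < N - ℓ N), SS α k (N - m) := by ring
    _ ≤ (2*(k+1) : ℝ)^α * (G α ^ k - TT α ℓ k N) := by
        apply mul_le_mul hfq hre hSnn
        positivity

lemma g_nonneg (hα : 0 < α) {κ : ℕ} (η : Fin κ → ℕ) : 0 ≤ ∏ y, f α (η y) :=
  Finset.prod_nonneg fun y _ => (f_pos hα _).le

/-- at most one site can be in a well -/
lemma Z_low (hα : 0 < α) (ℓ : ℕ → ℕ) (k N : ℕ) (hN1 : 2 * ℓ N < N) :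
    ∑ x : Fin (k+1), ∑ η ∈ (Finset.Nat.antidiagonalTuple (k+1) N).filter
      (fun η => N - ℓ N ≤ η x), ∏ y, f α (η y)
    ≤ ∑ η ∈ Finset.Nat.antidiagonalTuple (k+1) N, ∏ y, f α (η y) := by
  have h1 : ∀ x : Fin (k+1), ∑ η ∈ (Finset.Nat.antidiagonalTuple (k+1) N).filter
      (fun η => N - ℓ N ≤ η x), ∏ y, f α (η y)
      = ∑ η ∈ Finset.Nat.antidiagonalTuple (k+1) N,
          if N - ℓ N ≤ η x then ∏ y, f α (η y) else 0 :=
    fun x => Finset.sum_filter _ _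
  simp only [h1]
  rw [Finset.sum_comm]
  apply Finset.sum_le_sum
  intro η hη
  rw [Finset.Nat.mem_antidiagonalTuple] at hη
  rw [← Finset.sum_filter, Finset.sum_const]
  have hcard : (Finset.univ.filter (fun x : Fin (k+1) => N - ℓ N ≤ η x)).card ≤ 1 := by
    apply Finset.card_le_one.2
    intro a ha b hb
    simp only [Finset.mem_filter] at ha hb
    by_contra hab
    have hsub : ({a, b} : Finset (Fin (k+1))) ⊆ Finset.univ := Finset.subset_univ _
    have hpair : η a + η b ≤ N := by
      have := Finset.sum_le_sum_of_subset_of_nonneg hsub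
        (fun y _ _ => Nat.zero_le (η y))
      rw [Finset.sum_pair hab] at this
      omega
    omega
  calc (Finset.univ.filter (fun x : Fin (k+1) => N - ℓ N ≤ η x)).card • ∏ y, f α (η y)
      ≤ 1 • ∏ y, f α (η y) := by
        apply smul_le_smul_of_nonneg_right _ (g_nonneg hα η)
        exact_mod_cast hcard
    _ = ∏ y, f α (η y) := one_smul _ _

/-- every configuration has a site with at least `N/(k+1)` particles -/
lemma exists_big (k N : ℕ) (η : Fin (k+1) → ℕ)
    (hη : ∑ y, η y = N) : ∃ x, N / (k+1) ≤ η x := by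
  by_contra h
  push_neg at h
  set q := N / (k+1) with hq
  have hdiv := Nat.div_add_mod N (k+1)
  rw [← hq] at hdiv
  have hmod := Nat.mod_lt N (show 0 < k+1 by omega)
  rcases Nat.eq_zero_or_pos q with hq0 | hq0
  · have := h 0; omega
  · have hsum : ∑ y : Fin (k+1), η y ≤ ∑ _y : Fin (k+1), (q - 1) :=
      Finset.sum_le_sum fun y _ => by have := h y; omega
    rw [Finset.sum_const, Finset.card_univ, Fintype.card_fin, smul_eq_mul] at hsum
    have hmul : (k+1)*(q-1) + (k+1) = (k+1)*q := by
      rw [← Nat.mul_succ]; congr 1; omega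
    omega

/-- union bound: total mass is at most the sum over big-site classes -/
lemma Z_up_union (hα : 0 < α) (k N : ℕ) :
    ∑ η ∈ Finset.Nat.antidiagonalTuple (k+1) N, ∏ y, f α (η y)
    ≤ ∑ x : Fin (k+1), ∑ η ∈ (Finset.Nat.antidiagonalTuple (k+1) N).filter
      (fun η => N / (k+1) ≤ η x), ∏ y, f α (η y) := by
  have h1 : ∀ x : Fin (k+1), ∑ η ∈ (Finset.Nat.antidiagonalTuple (k+1) N).filter
      (fun η => N / (k+1) ≤ η x), ∏ y, f α (η y)
      = ∑ η ∈ Finset.Nat.antidiagonalTuple (k+1) N,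
          if N / (k+1) ≤ η x then ∏ y, f α (η y) else 0 :=
    fun x => Finset.sum_filter _ _
  simp only [h1]
  rw [Finset.sum_comm]
  apply Finset.sum_le_sum
  intro η hη
  rw [Finset.Nat.mem_antidiagonalTuple] at hη
  obtain ⟨x₀, hx₀⟩ := exists_big k N η hη
  have h2 := Finset.single_le_sum
    (f := fun x : Fin (k+1) => if N / (k+1) ≤ η x then ∏ y, f α (η y) else 0)
    (fun x _ => by split
                   exacts [g_nonneg hα η, le_refl 0]) (Finset.mem_univ x₀)
  simpa [hx₀] using h2

/-- splitting a filter along a second condition -/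
lemma filter_split (hα : 0 < α) {κ : ℕ} (s : Finset (Fin κ → ℕ))
    (p r : (Fin κ → ℕ) → Prop)
    (g : (Fin κ → ℕ) → ℝ) (hg : ∀ η, 0 ≤ g η) :
    ∑ η ∈ s.filter p, g η
    ≤ ∑ η ∈ s.filter (fun η => p η ∧ r η), g η
      + ∑ η ∈ s.filter (fun η => ¬ r η), g η := by
  rw [← Finset.sum_filter_add_sum_filter_not (s.filter p) r, Finset.filter_filter,
    Finset.filter_filter]
  apply add_le_add
  · apply le_of_eq
    apply Finset.sum_congr _ (fun _ _ => rfl)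
    ext η; simp [Finset.mem_filter]
  · apply Finset.sum_le_sum_of_subset_of_nonneg
    · intro η hη
      simp only [Finset.mem_filter] at hη ⊢
      exact ⟨hη.1, hη.2.2⟩
    · exact fun η _ _ => hg η

lemma Delta_bound (hα : 0 < α) (ℓ : ℕ → ℕ) (k N : ℕ) :
    ∑ η ∈ (Finset.Nat.antidiagonalTuple (k+1) N).filter
      (fun η => ∀ y, η y < N - ℓ N), ∏ y, f α (η y)
    ≤ ∑ x : Fin (k+1), ∑ η ∈ (Finset.Nat.antidiagonalTuple (k+1) N).filter
      (fun η => N / (k+1) ≤ η x ∧ η x < N - ℓ N), ∏ y, f α (η y) := by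
  have h1 : ∀ x : Fin (k+1), ∑ η ∈ (Finset.Nat.antidiagonalTuple (k+1) N).filter
      (fun η => N / (k+1) ≤ η x ∧ η x < N - ℓ N), ∏ y, f α (η y)
      = ∑ η ∈ Finset.Nat.antidiagonalTuple (k+1) N,
          if N / (k+1) ≤ η x ∧ η x < N - ℓ N then ∏ y, f α (η y) else 0 :=
    fun x => Finset.sum_filter _ _
  simp only [h1]
  rw [Finset.sum_filter, Finset.sum_comm]
  apply Finset.sum_le_sum
  intro η hη
  rw [Finset.Nat.mem_antidiagonalTuple] at hη
  by_cases hall : ∀ y, η y < N - ℓ N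
  · obtain ⟨x₀, hx₀⟩ := exists_big k N η hη
    have h2 := Finset.single_le_sum
      (f := fun x : Fin (k+1) => if N / (k+1) ≤ η x ∧ η x < N - ℓ N
        then ∏ y, f α (η y) else 0)
      (fun x _ => by split
                     exacts [g_nonneg hα η, le_refl 0]) (Finset.mem_univ x₀)
    simpa [hall, hx₀, hall x₀] using h2
  · rw [if_neg hall]
    apply Finset.sum_nonneg
    intro x _
    split
    exacts [g_nonneg hα η, le_refl 0]

lemma regime (k : ℕ) {ℓ : ℕ → ℕ}
    (hℓN : Tendsto (fun N => (ℓ N : ℝ) / (N : ℝ)) atTop (nhds 0)) :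
    ∀ᶠ N in atTop, 2 * ℓ N < N ∧ 2*(k+1) ≤ N := by
  have h1 : ∀ᶠ N in atTop, (ℓ N : ℝ)/(N:ℝ) < 1/2 :=
    hℓN.eventually (gt_mem_nhds (by norm_num))
  have h2 : ∀ᶠ N : ℕ in atTop, 2*(k+1) ≤ N := eventually_ge_atTop _
  filter_upwards [h1, h2] with N h1 h2
  refine ⟨?_, h2⟩
  have hN0 : (0:ℝ) < (N:ℝ) := by
    have : 1 ≤ N := by omega
    exact_mod_cast this
  rw [div_lt_iff₀ hN0] at h1
  have : (2 * ℓ N : ℝ) < N := by push_cast; linarith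
  exact_mod_cast this

set_option maxHeartbeats 1000000 in
lemma T_tendsto (hα : 1 < α) {ℓ : ℕ → ℕ} (hℓ : Tendsto ℓ atTop atTop) (k : ℕ) :
    Tendsto (TT α ℓ k) atTop (nhds (G α ^ k)) := by
  have h1 : Tendsto (fun n => ∑ i ∈ Finset.range n, SS α k i) atTop (nhds (G α ^ k)) :=
    (hasSum_SS hα k).tendsto_sum_nat
  have h2 : Tendsto (fun N => ℓ N + 1) atTop atTop :=
    (tendsto_add_atTop_nat 1).comp hℓ
  exact h1.comp h2

lemma c_tendsto (hα : 0 ≤ α) {ℓ : ℕ → ℕ}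
    (hℓN : Tendsto (fun N => (ℓ N : ℝ) / (N : ℝ)) atTop (nhds 0)) :
    Tendsto (cc α ℓ) atTop (nhds 1) := by
  have hbase : Tendsto (fun N : ℕ => (N:ℝ) / ((N - ℓ N : ℕ):ℝ)) atTop (nhds 1) := by
    have hev : ∀ᶠ N : ℕ in atTop, ((N - ℓ N : ℕ):ℝ)/(N:ℝ) = 1 - (ℓ N:ℝ)/(N:ℝ) := by
      have h1 : ∀ᶠ N in atTop, (ℓ N : ℝ)/(N:ℝ) < 1/2 :=
        hℓN.eventually (gt_mem_nhds (by norm_num))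
      filter_upwards [h1, eventually_ge_atTop (1:ℕ)] with N h1 hN1
      have hN0 : (0:ℝ) < (N:ℝ) := by exact_mod_cast hN1
      rw [div_lt_iff₀ hN0] at h1
      have hle : ℓ N ≤ N := by
        have : (ℓ N : ℝ) < N := by linarith
        exact_mod_cast this.le
      rw [Nat.cast_sub hle, sub_div, div_self hN0.ne']
    have h2 : Tendsto (fun N : ℕ => ((N - ℓ N : ℕ):ℝ)/(N:ℝ)) atTop (nhds 1) := by
      have h0 := hℓN.const_sub 1
      rw [sub_zero] at h0
      exact h0.congr' (hev.mono fun N h => h.symm)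
    have h3 : Tendsto (fun N : ℕ => (((N - ℓ N : ℕ):ℝ)/(N:ℝ))⁻¹) atTop (nhds 1) := by
      simpa using h2.inv₀ (by norm_num)
    apply h3.congr'
    filter_upwards [eventually_ge_atTop (1:ℕ)] with N hN1
    have hN0 : (0:ℝ) < (N:ℝ) := by exact_mod_cast hN1
    rw [inv_div]
  have := hbase.rpow_const (p := α) (Or.inr hα)
  rw [Real.one_rpow] at this
  exact this
end ZRaux

/-- Concentration of `ν_N` on the wells `𝓔^x_N = {η : η(x) ≥ N − ℓ_N}`:
`ν_N(Δ_N) → 0` and `ν_N(𝓔^x_N) → 1/κ` for every `x`. -/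
theorem stmt15 (α : ℝ) (hα : 1 < α) (κ : ℕ) (hκ : 2 ≤ κ)
    (ℓ : ℕ → ℕ) (hℓ : Tendsto ℓ atTop atTop)
    (hℓN : Tendsto (fun N => (ℓ N : ℝ) / (N : ℝ)) atTop (nhds 0)) :
    Tendsto (fun N => ∑ η ∈ (confZR κ N).filter
        (fun η => ∀ x, η x < N - ℓ N), nuZR α κ N η) atTop (nhds 0)
    ∧ ∀ x : Fin κ,
        Tendsto (fun N => ∑ η ∈ (confZR κ N).filter
          (fun η => N - ℓ N ≤ η x), nuZR α κ N η) atTop (nhds (1 / κ)) := by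
  have hα0 : (0:ℝ) < α := by linarith
  obtain ⟨k, rfl⟩ : ∃ k, κ = k + 1 := ⟨κ - 1, by omega⟩
  -- abbreviations
  set Γ : ℝ := ZRaux.G α with hΓdef
  set T : ℕ → ℝ := ZRaux.TT α ℓ k with hTdef
  set c : ℕ → ℝ := ZRaux.cc α ℓ with hcdef
  set C : ℝ := (2*(k+1) : ℝ)^α with hCdef
  set W : Fin (k+1) → ℕ → ℝ := fun x N => (N:ℝ)^α *
    ∑ η ∈ (Finset.Nat.antidiagonalTuple (k+1) N).filter (fun η => N - ℓ N ≤ η x),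
      ∏ y, ZRaux.f α (η y) with hWdef
  set Z : ℕ → ℝ := fun N => (N:ℝ)^α * ZRaux.SS α (k+1) N with hZdef
  have hreg := ZRaux.regime k hℓN
  have hT : Tendsto T atTop (nhds (Γ^k)) := ZRaux.T_tendsto hα hℓ k
  have hc : Tendsto c atTop (nhds 1) := ZRaux.c_tendsto hα0.le hℓN
  have hCnn : 0 ≤ C := Real.rpow_nonneg (by positivity) _
  have htail0 : Tendsto (fun N => ((k:ℝ)+1) * C * (Γ^k - T N)) atTop (nhds 0) := by
    have h1 : Tendsto (fun N => Γ^k - T N) atTop (nhds 0) := by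
      have := hT.const_sub (Γ^k)
      simpa using this
    have := h1.const_mul (((k:ℝ)+1) * C)
    simpa using this
  -- eventual bounds on the well masses
  have hWlo : ∀ᶠ N in atTop, ∀ x, T N ≤ W x N := by
    filter_upwards [hreg] with N hN x
    exact (ZRaux.well_bounds hα ℓ k N x hN.1).1
  have hWhi : ∀ᶠ N in atTop, ∀ x, W x N ≤ c N * T N := by
    filter_upwards [hreg] with N hN x
    exact (ZRaux.well_bounds hα ℓ k N x hN.1).2
  have hWt : ∀ x, Tendsto (W x) atTop (nhds (Γ^k)) := by
    intro x
    apply tendsto_of_tendsto_of_tendsto_of_le_of_le' hT (by simpa using hc.mul hT)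
      (hWlo.mono fun N h => h x) (hWhi.mono fun N h => h x)
  have hNpow : ∀ N : ℕ, (0:ℝ) ≤ (N:ℝ)^α := fun N => Real.rpow_nonneg (Nat.cast_nonneg N) _
  -- lower bound on Z
  have hZlo : ∀ᶠ N in atTop, ∑ x, W x N ≤ Z N := by
    filter_upwards [hreg] with N hN
    have h := ZRaux.Z_low hα0 ℓ k N hN.1
    calc ∑ x, W x N
        = (N:ℝ)^α * ∑ x : Fin (k+1), ∑ η ∈ (Finset.Nat.antidiagonalTuple (k+1) N).filter
            (fun η => N - ℓ N ≤ η x), ∏ y, ZRaux.f α (η y) := by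
          rw [Finset.mul_sum]
      _ ≤ (N:ℝ)^α * ∑ η ∈ Finset.Nat.antidiagonalTuple (k+1) N, ∏ y, ZRaux.f α (η y) :=
          mul_le_mul_of_nonneg_left h (hNpow N)
      _ = Z N := rfl
  have htail : ∀ᶠ N : ℕ in atTop, ∀ x : Fin (k+1),
      (N:ℝ)^α * ∑ η ∈ (Finset.Nat.antidiagonalTuple (k+1) N).filter
        (fun η => N / (k+1) ≤ η x ∧ η x < N - ℓ N), ∏ y, ZRaux.f α (η y)
      ≤ C * (Γ^k - T N) := by
    filter_upwards [hreg] with N hN x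
    exact ZRaux.tail_bound hα ℓ k N x hN.1 hN.2
  -- upper bound on Z
  have hZhi : ∀ᶠ N in atTop, Z N ≤ (∑ x, W x N) + ((k:ℝ)+1) * C * (Γ^k - T N) := by
    filter_upwards [htail] with N htailN
    have h1 := ZRaux.Z_up_union (α := α) hα0 k N
    have h2 : ∀ x : Fin (k+1),
        ∑ η ∈ (Finset.Nat.antidiagonalTuple (k+1) N).filter
          (fun η => N / (k+1) ≤ η x), ∏ y, ZRaux.f α (η y)
        ≤ ∑ η ∈ (Finset.Nat.antidiagonalTuple (k+1) N).filter
            (fun η => N / (k+1) ≤ η x ∧ η x < N - ℓ N), ∏ y, ZRaux.f α (η y)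
          + ∑ η ∈ (Finset.Nat.antidiagonalTuple (k+1) N).filter
            (fun η => N - ℓ N ≤ η x), ∏ y, ZRaux.f α (η y) := by
      intro x
      rw [← Finset.sum_filter_add_sum_filter_not
        ((Finset.Nat.antidiagonalTuple (k+1) N).filter (fun η => N / (k+1) ≤ η x))
        (fun η => η x < N - ℓ N)]
      apply add_le_add
      · apply le_of_eq
        apply Finset.sum_congr _ (fun _ _ => rfl)
        ext η
        simp only [Finset.mem_filter]
        tauto
      · apply Finset.sum_le_sum_of_subset_of_nonneg
        · intro η hη
          simp only [Finset.mem_filter] at hη ⊢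
          refine ⟨hη.1.1, by omega⟩
        · exact fun η _ _ => ZRaux.g_nonneg hα0 η
    calc Z N ≤ (N:ℝ)^α * ∑ x : Fin (k+1),
          ∑ η ∈ (Finset.Nat.antidiagonalTuple (k+1) N).filter
            (fun η => N / (k+1) ≤ η x), ∏ y, ZRaux.f α (η y) :=
        mul_le_mul_of_nonneg_left h1 (hNpow N)
      _ = ∑ x : Fin (k+1), (N:ℝ)^α *
          ∑ η ∈ (Finset.Nat.antidiagonalTuple (k+1) N).filter
            (fun η => N / (k+1) ≤ η x), ∏ y, ZRaux.f α (η y) := by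
          rw [Finset.mul_sum]
      _ ≤ ∑ x : Fin (k+1), (C * (Γ^k - T N) + W x N) := by
          apply Finset.sum_le_sum
          intro x _
          have h3 := mul_le_mul_of_nonneg_left (h2 x) (hNpow N)
          rw [mul_add] at h3
          exact h3.trans (add_le_add (htailN x) le_rfl)
      _ = (∑ x, W x N) + ((k:ℝ)+1) * C * (Γ^k - T N) := by
          rw [Finset.sum_add_distrib, Finset.sum_const, Finset.card_univ,
            Fintype.card_fin, nsmul_eq_mul]
          push_cast
          ring
  -- Z converges to (k+1) Γ^k
  have hZt : Tendsto Z atTop (nhds (((k:ℝ)+1) * Γ^k)) := by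
    apply tendsto_of_tendsto_of_tendsto_of_le_of_le'
      (g := fun N : ℕ => ((k:ℝ)+1) * T N)
      (h := fun N : ℕ => ((k:ℝ)+1) * (c N * T N) + ((k:ℝ)+1) * C * (Γ^k - T N))
    · exact hT.const_mul _
    · have h1 : Tendsto (fun N => ((k:ℝ)+1) * (c N * T N)) atTop
          (nhds (((k:ℝ)+1) * Γ^k)) := by
        have := (hc.mul hT).const_mul ((k:ℝ)+1)
        simpa using this
      have := h1.add htail0
      simpa using this
    · filter_upwards [hWlo, hZlo] with N h1 h2
      calc ((k:ℝ)+1) * T N = ∑ _x : Fin (k+1), T N := by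
            rw [Finset.sum_const, Finset.card_univ, Fintype.card_fin, nsmul_eq_mul]
            push_cast; ring
        _ ≤ ∑ x, W x N := Finset.sum_le_sum fun x _ => h1 x
        _ ≤ Z N := h2
    · filter_upwards [hWhi, hZhi] with N h1 h2
      apply h2.trans
      apply add_le_add _ le_rfl
      calc ∑ x, W x N ≤ ∑ _x : Fin (k+1), c N * T N :=
            Finset.sum_le_sum fun x _ => h1 x
        _ = ((k:ℝ)+1) * (c N * T N) := by
            rw [Finset.sum_const, Finset.card_univ, Fintype.card_fin, nsmul_eq_mul]
            push_cast; ring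
  have hG1 : 1 ≤ Γ := ZRaux.G_ge_one hα
  have hΓpos : (0:ℝ) < Γ^k := by positivity
  have hlim_ne : ((k:ℝ)+1) * Γ^k ≠ 0 := by positivity
  have hZ1 : ∀ᶠ N in atTop, 1 ≤ Z N := by
    filter_upwards [eventually_ge_atTop 1] with N hN
    exact ZRaux.Z_ge_one hα0 (k+1) N (by omega) hN
  -- rewriting the measures
  have hsum_eq : ∀ (N : ℕ) (s : Finset (Fin (k+1) → ℕ)),
      ∑ η ∈ s, nuZR α (k+1) N η
      = ((N:ℝ)^α * ∑ η ∈ s, ∏ y, ZRaux.f α (η y)) / Z N := by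
    intro N s
    rw [ZRaux.nu_sum_eq, ZRaux.ZZR_eq]
  constructor
  · -- the Delta part
    apply tendsto_of_tendsto_of_tendsto_of_le_of_le'
      (g := fun _ => (0:ℝ)) (h := fun N : ℕ => ((k:ℝ)+1) * C * (Γ^k - T N))
      tendsto_const_nhds htail0
    · filter_upwards [hZ1] with N hN
      rw [hsum_eq]
      apply div_nonneg _ (by linarith)
      apply mul_nonneg (hNpow N)
      exact Finset.sum_nonneg fun η _ => ZRaux.g_nonneg hα0 η
    · filter_upwards [hZ1, htail] with N hZN htailN
      rw [hsum_eq]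
      have hDnn : 0 ≤ (N:ℝ)^α * ∑ η ∈ (confZR (k+1) N).filter
          (fun η => ∀ x, η x < N - ℓ N), ∏ y, ZRaux.f α (η y) :=
        mul_nonneg (hNpow N) (Finset.sum_nonneg fun η _ => ZRaux.g_nonneg hα0 η)
      have hdiv : ((N:ℝ)^α * ∑ η ∈ (confZR (k+1) N).filter
          (fun η => ∀ x, η x < N - ℓ N), ∏ y, ZRaux.f α (η y)) / Z N
          ≤ (N:ℝ)^α * ∑ η ∈ (confZR (k+1) N).filter
          (fun η => ∀ x, η x < N - ℓ N), ∏ y, ZRaux.f α (η y) := by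
        apply div_le_self hDnn hZN
      apply hdiv.trans
      have hDb := ZRaux.Delta_bound (α := α) hα0 ℓ k N
      calc (N:ℝ)^α * ∑ η ∈ (confZR (k+1) N).filter
            (fun η => ∀ x, η x < N - ℓ N), ∏ y, ZRaux.f α (η y)
          ≤ (N:ℝ)^α * ∑ x : Fin (k+1),
            ∑ η ∈ (Finset.Nat.antidiagonalTuple (k+1) N).filter
              (fun η => N / (k+1) ≤ η x ∧ η x < N - ℓ N), ∏ y, ZRaux.f α (η y) :=
            mul_le_mul_of_nonneg_left hDb (hNpow N)
        _ = ∑ x : Fin (k+1), (N:ℝ)^α *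
            ∑ η ∈ (Finset.Nat.antidiagonalTuple (k+1) N).filter
              (fun η => N / (k+1) ≤ η x ∧ η x < N - ℓ N), ∏ y, ZRaux.f α (η y) := by
            rw [Finset.mul_sum]
        _ ≤ ∑ _x : Fin (k+1), C * (Γ^k - T N) :=
            Finset.sum_le_sum fun x _ => htailN x
        _ = ((k:ℝ)+1) * C * (Γ^k - T N) := by
            rw [Finset.sum_const, Finset.card_univ, Fintype.card_fin, nsmul_eq_mul]
            push_cast; ring
  · -- the wells
    intro x
    have heq : (fun N => ∑ η ∈ (confZR (k+1) N).filter
        (fun η => N - ℓ N ≤ η x), nuZR α (k+1) N η) = fun N => W x N / Z N := by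
      funext N
      rw [hsum_eq]
      rfl
    rw [heq]
    have hdiv := (hWt x).div hZt hlim_ne
    have hval : Γ^k / (((k:ℝ)+1) * Γ^k) = 1 / ((k + 1 : ℕ) : ℝ) := by
      push_cast
      field_simp
    rw [hval] at hdiv
    exact hdiv

end
end
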